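/- arXiv:2003.13229 — 2 statements merged into one kernel-verified Lean document; each statement's English description precedes it below -/
import Mathlib

section
/- For every even positive integer k, 1/(2k+1) = 1/(3k+3) + 1/(6k+3) + 1/(6k^2+9k+3), and all three denominators 3k+3, 6k+3, 6k^2+9k+3 are odd. -/
theorem stmt_6 (k : ℕ) (hk : 0 < k) (heven : Even k) :
    (1 : ℚ) / (2 * k + 1) = 1 / (3 * k + 3) + 1 / (6 * k + 3) + 1 / (6 * k ^ 2 + 9 * k + 3) ∧
      Odd (3 * k + 3) ∧ Odd (6 * k + 3) ∧ Odd (6 * k ^ 2 + 9 * k + 3) := by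
  obtain ⟨m, rfl⟩ := heven
  refine ⟨?_, ⟨3 * m + 1, by ring⟩, ⟨6 * m + 1, by ring⟩, ⟨12 * m ^ 2 + 9 * m + 1, by ring⟩⟩
  have hq : (0 : ℚ) < (m : ℚ) := by
    exact_mod_cast Nat.pos_of_ne_zero (by rintro rfl; simp at hk)
  push_cast
  field_simp
  ring
end

section
/- Every rational number a/b with 0 < a < b has a representation as a finite sum of distinct unit fractions 1/n with n > 1. -/
lemma egyptian_aux : ∀ a : ℕ, ∀ b : ℕ, 0 < a → a < b →
    ∃ S : Finset ℕ, (∀ n ∈ S, b ≤ n * a) ∧ (a : ℚ) / b = ∑ n ∈ S, (1 : ℚ) / n := by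
  intro a
  induction a using Nat.strong_induction_on with
  | _ a ih =>
    intro b ha hab
    have hb : 0 < b := lt_trans ha hab
    by_cases hdvd : a ∣ b
    · refine ⟨{b / a}, ?_, ?_⟩
      · intro n hn
        simp only [Finset.mem_singleton] at hn
        subst hn
        rw [Nat.div_mul_cancel hdvd]
      · rw [Finset.sum_singleton]
        have hcast : ((b / a : ℕ) : ℚ) = (b : ℚ) / a := Nat.cast_div hdvd (by positivity)
        rw [hcast]
        rw [one_div_div]
    · -- greedy step
      set n := b / a + 1 with hn
      have hmod : 0 < b % a := Nat.pos_of_ne_zero (fun h => hdvd (Nat.dvd_of_mod_eq_zero h))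
      have hmodlt : b % a < a := Nat.mod_lt b ha
      set a' := a - b % a with ha'
      have ha'pos : 0 < a' := Nat.sub_pos_of_lt hmodlt
      have ha'lt : a' < a := Nat.sub_lt ha hmod
      have hna : n * a = b + a' := by
        have h0 := Nat.div_add_mod b a
        have h1 : n * a = a * (b / a) + a := by rw [hn]; ring
        omega
      have hblt : b < b * n := by
        have : 1 < n := by
          have : 1 ≤ b / a := Nat.one_le_div_iff ha |>.mpr (le_of_lt hab)
          omega
        calc b = b * 1 := (mul_one b).symm
        _ < b * n := (mul_lt_mul_iff_right₀ hb).mpr this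
      have ha'ltbn : a' < b * n := lt_trans (lt_trans ha'lt hab) hblt
      obtain ⟨S', hS'bound, hS'sum⟩ := ih a' ha'lt (b * n) ha'pos ha'ltbn
      have hnotmem : n ∉ S' := by
        intro hmem
        have h1 := hS'bound n hmem
        have h2 : n * a' < b * n := by
          calc n * a' < n * b := (mul_lt_mul_iff_right₀ (Nat.succ_pos (b / a))).mpr (lt_trans ha'lt hab)
          _ = b * n := Nat.mul_comm n b
        exact lt_irrefl _ (lt_of_le_of_lt h1 h2)
      refine ⟨insert n S', ?_, ?_⟩
      · intro m hm
        rcases Finset.mem_insert.mp hm with h | h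
        · subst h; omega
        · have h1 := hS'bound m h
          have : m * a' ≤ m * a := Nat.mul_le_mul_left m (le_of_lt ha'lt)
          calc b ≤ b * n := le_of_lt hblt
          _ ≤ m * a' := h1
          _ ≤ m * a := this
      · rw [Finset.sum_insert hnotmem, ← hS'sum]
        have hcast : ((a' : ℕ) : ℚ) = (n : ℚ) * a - b := by
          have h2 : (n : ℚ) * a = b + a' := by exact_mod_cast hna
          linarith
        have hbQ : (b : ℚ) ≠ 0 := by positivity
        have hnQ : (n : ℚ) ≠ 0 := by positivity
        rw [hcast]
        field_simp
        push_cast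
        ring

theorem stmt_18 (a b : ℕ) (ha : 0 < a) (hab : a < b) :
    ∃ (S : Finset ℕ), (∀ n ∈ S, 1 < n) ∧ (a : ℚ) / b = ∑ n ∈ S, (1 : ℚ) / n := by
  obtain ⟨S, hbound, hsum⟩ := egyptian_aux a b ha hab
  refine ⟨S, ?_, hsum⟩
  intro m hm
  have h1 := hbound m hm
  have : a < m * a := lt_of_lt_of_le hab h1
  by_contra h
  push_neg at h
  interval_cases m <;> omega
end
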